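/- Let ω > 0 be locally integrable on the unit circle 𝕊 and suppose there exist constants C₁ > 0, C₂ > 0 such that ω(E)/ω(I) ≤ C₂(|E|/|I|)^{C₁} for all arcs I ⊂ 𝕊 and measurable E ⊂ I. Then there exists β > 0 such that for all arcs I ⊂ 𝕊 and measurable E ⊂ I, ω(E)/ω(I) < β implies |E|/|I| < 1/2. -/

import Mathlib

open MeasureTheory Set
open scoped ENNReal

instance : Fact ((0:ℝ) < 2 * Real.pi) := ⟨by positivity⟩

/-- The unit circle, modeled as `ℝ / 2πℤ` with its arclength (Haar) measure. -/
abbrev Circle2pi := AddCircle (2 * Real.pi)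

/-- A (closed-open) arc of the circle: the image of an interval `(a, b]` with
`b - a` at most `2π`. -/
def IsArc (I : Set Circle2pi) : Prop :=
  ∃ a b : ℝ, a < b ∧ b ≤ a + 2 * Real.pi ∧
    I = (fun x : ℝ => (x : Circle2pi)) '' Set.Ioc a b

namespace CFP

noncomputable section

/-- The weighted measure `ω dx` on the real line. -/
def nu (g : ℝ → ℝ) : Measure ℝ := volume.withDensity (fun x => ENNReal.ofReal (g x))

/-- Bundled hypotheses on the (lifted) weight. -/
structure Setup (g : ℝ → ℝ) (L C₁ C₂ : ℝ) : Prop where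
  meas : Measurable g
  pos : ∀ x, 0 < g x
  int : ∀ a b : ℝ, IntegrableOn g (Ioc a b)
  hL : 0 < L
  hC₁ : 0 < C₁
  hC₂ : 0 < C₂
  h1a : ∀ u v : ℝ, ∀ E : Set ℝ, u < v → v ≤ u + L → E ⊆ Ioc u v → MeasurableSet E →
      nu g E ≤ ENNReal.ofReal (C₂ * ((volume E).toReal / (v - u)) ^ C₁) * nu g (Ioc u v)

variable {g : ℝ → ℝ} {L C₁ C₂ : ℝ}

theorem Setup.nu_eq (S : Setup g L C₁ C₂) {A : Set ℝ} (hi : IntegrableOn g A)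
    (hA : MeasurableSet A) : nu g A = ENNReal.ofReal (∫ x in A, g x) := by
  rw [nu, withDensity_apply _ hA,
    ← ofReal_integral_eq_lintegral_ofReal hi
      (Filter.Eventually.of_forall fun x => (S.pos x).le)]

theorem Setup.nu_Ioc_eq (S : Setup g L C₁ C₂) (a b : ℝ) :
    nu g (Ioc a b) = ENNReal.ofReal (∫ x in Ioc a b, g x) :=
  S.nu_eq (S.int a b) measurableSet_Ioc

theorem Setup.nu_lt_top (S : Setup g L C₁ C₂) {A : Set ℝ} {a b : ℝ} (h : A ⊆ Ioc a b) :
    nu g A < ∞ :=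
  lt_of_le_of_lt (measure_mono h) (by rw [S.nu_Ioc_eq a b]; exact ENNReal.ofReal_lt_top)

theorem Setup.nu_Ioc_pos (S : Setup g L C₁ C₂) {a b : ℝ} (hab : a < b) :
    0 < nu g (Ioc a b) := by
  rw [pos_iff_ne_zero]
  intro h0
  rw [nu, withDensity_apply _ measurableSet_Ioc] at h0
  rw [lintegral_eq_zero_iff (S.meas.ennreal_ofReal)] at h0
  have : ∀ᵐ x ∂(volume.restrict (Ioc a b)), False := by
    filter_upwards [h0] with x hx
    simp only [Pi.zero_apply, ENNReal.ofReal_eq_zero] at hx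
    exact absurd hx (not_le.mpr (S.pos x))
  rw [ae_iff] at this
  simp only [not_false_iff, setOf_true] at this
  rw [Measure.restrict_apply_univ] at this
  rw [Real.volume_Ioc, ENNReal.ofReal_eq_zero] at this
  linarith

/-- The density gain parameter. -/
def del (C₁ C₂ : ℝ) : ℝ := min ((2*C₂)⁻¹ ^ (1/C₁)) (1/2)

/-- The contraction factor. -/
def t0 (C₁ C₂ : ℝ) : ℝ := 1 - del C₁ C₂

theorem del_pos (hC₁ : 0 < C₁) (hC₂ : 0 < C₂) : 0 < del C₁ C₂ :=
  lt_min (Real.rpow_pos_of_pos (by positivity) _) one_half_pos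

theorem del_le_half : del C₁ C₂ ≤ 1/2 := min_le_right _ _

theorem t0_lt_one (hC₁ : 0 < C₁) (hC₂ : 0 < C₂) : t0 C₁ C₂ < 1 := by
  have := del_pos hC₁ hC₂; unfold t0; linarith

theorem t0_half_le : 1/2 ≤ t0 C₁ C₂ := by
  have := del_le_half (C₁ := C₁) (C₂ := C₂); unfold t0; linarith

theorem t0_pos : 0 < t0 C₁ C₂ := lt_of_lt_of_le one_half_pos t0_half_le

/-- Key consequence of (1a): a subset of at most half the weighted mass occupies at
most a `t0` fraction of the length. -/
theorem Setup.easy_bound (S : Setup g L C₁ C₂) {x y : ℝ} {A : Set ℝ}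
    (hxy : x < y) (hyL : y ≤ x + L) (hA : MeasurableSet A) (hsub : A ⊆ Ioc x y)
    (h2 : 2 * nu g A ≤ nu g (Ioc x y)) :
    volume A ≤ ENNReal.ofReal (t0 C₁ C₂) * volume (Ioc x y) := by
  have hC₁ := S.hC₁
  have hC₂ := S.hC₂
  set I := Ioc x y with hI
  set B := I \ A with hB
  have hBsub : B ⊆ I := diff_subset
  have hBmeas : MeasurableSet B := measurableSet_Ioc.diff hA
  have hdecomp : nu g A + nu g B = nu g I := by
    rw [hB, ← measure_inter_add_diff (μ := nu g) I hA, inter_eq_self_of_subset_right hsub]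
  have hAfin : nu g A ≠ ∞ := (S.nu_lt_top hsub).ne
  have hIfin : nu g I ≠ ∞ := (S.nu_lt_top (subset_refl _)).ne
  have hIpos : nu g I ≠ 0 := (S.nu_Ioc_pos hxy).ne'
  have hAB : nu g A ≤ nu g B := by
    have : nu g A + nu g A ≤ nu g A + nu g B := by
      rw [hdecomp]; calc nu g A + nu g A = 2 * nu g A := by ring
        _ ≤ nu g I := h2
    exact (ENNReal.add_le_add_iff_left hAfin).mp this
  have hI2B : nu g I ≤ 2 * nu g B := by
    rw [← hdecomp, two_mul]; exact add_le_add_left hAB _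
  set sB : ℝ := (volume B).toReal / (y - x) with hsB
  have hsB0 : 0 ≤ sB := by
    apply div_nonneg ENNReal.toReal_nonneg; linarith
  have h1aB := S.h1a x y B hxy hyL hBsub hBmeas
  have hmul : (1:ℝ≥0∞) * nu g I ≤ ENNReal.ofReal (2 * (C₂ * sB ^ C₁)) * nu g I := by
    rw [one_mul]
    calc nu g I ≤ 2 * nu g B := hI2B
      _ ≤ 2 * (ENNReal.ofReal (C₂ * sB ^ C₁) * nu g I) := by
          exact mul_le_mul_right h1aB 2
      _ = ENNReal.ofReal (2 * (C₂ * sB ^ C₁)) * nu g I := by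
          rw [ENNReal.ofReal_mul (by norm_num : (0:ℝ) ≤ 2)]
          rw [ENNReal.ofReal_ofNat, mul_assoc]
  have h1le : (1:ℝ) ≤ 2 * (C₂ * sB ^ C₁) := by
    have := (ENNReal.mul_le_mul_iff_left hIpos hIfin).mp hmul
    have hnn : (0:ℝ) ≤ 2 * (C₂ * sB ^ C₁) := by
      have h := Real.rpow_nonneg hsB0 C₁
      nlinarith
    rwa [← ENNReal.ofReal_one, ENNReal.ofReal_le_ofReal_iff hnn] at this
  -- deduce sB ≥ del
  have hinv : (2*C₂)⁻¹ ≤ sB ^ C₁ := by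
    rw [inv_le_iff_one_le_mul₀ (by positivity)]
    calc (1:ℝ) ≤ 2 * (C₂ * sB ^ C₁) := h1le
      _ = sB ^ C₁ * (2 * C₂) := by ring
  have hdel : del C₁ C₂ ≤ sB := by
    refine le_trans (min_le_left _ _) ?_
    calc (2*C₂)⁻¹ ^ (1/C₁) ≤ (sB ^ C₁) ^ (1/C₁) := by
          apply Real.rpow_le_rpow (by positivity) hinv (le_of_lt (by positivity))
      _ = sB ^ (C₁ * (1/C₁)) := (Real.rpow_mul hsB0 _ _).symm
      _ = sB := by rw [mul_one_div, div_self S.hC₁.ne', Real.rpow_one]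
  -- conclude
  have hvolI : volume I = ENNReal.ofReal (y - x) := Real.volume_Ioc
  have hBvfin : volume B ≠ ∞ :=
    (lt_of_le_of_lt (measure_mono hBsub) (by rw [hvolI]; exact ENNReal.ofReal_lt_top)).ne
  have hBtoReal : del C₁ C₂ * (y - x) ≤ (volume B).toReal := by
    have : del C₁ C₂ ≤ (volume B).toReal / (y - x) := hdel
    rw [le_div_iff₀ (by linarith : (0:ℝ) < y - x)] at this
    linarith
  have hofB : ENNReal.ofReal (del C₁ C₂ * (y - x)) ≤ volume B := by
    rw [← ENNReal.ofReal_toReal hBvfin]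
    exact ENNReal.ofReal_le_ofReal hBtoReal
  have hvdecomp : volume A + volume B = volume I := by
    rw [hB, ← measure_inter_add_diff (μ := volume) I hA, inter_eq_self_of_subset_right hsub]
  have hAeq : volume A = volume I - volume B := by
    rw [← hvdecomp, ENNReal.add_sub_cancel_right hBvfin]
  calc volume A = volume I - volume B := hAeq
    _ ≤ ENNReal.ofReal (y - x) - ENNReal.ofReal (del C₁ C₂ * (y - x)) :=
        tsub_le_tsub (le_of_eq hvolI) hofB
    _ = ENNReal.ofReal ((y - x) - del C₁ C₂ * (y - x)) := by
        rw [ENNReal.ofReal_sub _ (by nlinarith [del_pos hC₁ hC₂] : (0:ℝ) ≤ del C₁ C₂ * (y - x))]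
    _ = ENNReal.ofReal (t0 C₁ C₂ * (y - x)) := by rw [t0]; ring_nf
    _ = ENNReal.ofReal (t0 C₁ C₂) * volume I := by
        rw [hvolI, ← ENNReal.ofReal_mul (le_of_lt t0_pos)]

theorem Setup.exists_median (S : Setup g L C₁ C₂) {x y : ℝ} (hxy : x < y) :
    ∃ c, x < c ∧ c < y ∧ nu g (Ioc x c) = nu g (Ioc x y) / 2 := by
  set F : ℝ → ℝ := fun z => ∫ t in Ioc x z, g t with hF
  have hcont : ContinuousOn F (Icc x y) := by
    apply intervalIntegral.continuousOn_primitive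
    exact (S.int (x-1) y).mono_set (fun t ht => ⟨by linarith [ht.1], ht.2⟩)
  have hFx : F x = 0 := by simp [hF]
  have hFypos : 0 < F y := by
    have h0 : nu g (Ioc x y) ≠ 0 := (S.nu_Ioc_pos hxy).ne'
    have hfin : nu g (Ioc x y) ≠ ∞ := (S.nu_lt_top (subset_refl _)).ne
    have := ENNReal.toReal_pos h0 hfin
    rwa [S.nu_Ioc_eq x y, ENNReal.toReal_ofReal (by
      exact setIntegral_nonneg measurableSet_Ioc (fun t _ => (S.pos t).le))] at this
  have hmem : F y / 2 ∈ Ioo (F x) (F y) := by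
    constructor <;> [rw [hFx]; skip] <;> linarith
  obtain ⟨c, hc, hFc⟩ := intermediate_value_Ioo (le_of_lt hxy) hcont hmem
  refine ⟨c, hc.1, hc.2, ?_⟩
  have h1 : nu g (Ioc x c) = ENNReal.ofReal (F c) :=
    S.nu_eq ((S.int x y).mono_set (Ioc_subset_Ioc_right hc.2.le)) measurableSet_Ioc
  rw [h1, hFc, S.nu_Ioc_eq x y]
  rw [ENNReal.ofReal_div_of_pos (by norm_num), ENNReal.ofReal_ofNat]

open Classical in
/-- The weighted median point of an interval. -/
def med (g : ℝ → ℝ) (x y : ℝ) : ℝ :=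
  if h : ∃ c, x < c ∧ c < y ∧ nu g (Ioc x c) = nu g (Ioc x y) / 2 then h.choose else x

theorem Setup.med_spec (S : Setup g L C₁ C₂) {x y : ℝ} (hxy : x < y) :
    x < med g x y ∧ med g x y < y ∧ nu g (Ioc x (med g x y)) = nu g (Ioc x y) / 2 := by
  rw [med]
  split_ifs with h
  · exact h.choose_spec
  · exact absurd (S.exists_median hxy) h

/-- The two children of an interval (split at the weighted median). -/
def child (g : ℝ → ℝ) (p : ℝ × ℝ) (b : Bool) : ℝ × ℝ :=
  if b then (med g p.1 p.2, p.2) else (p.1, med g p.1 p.2)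

/-- The dyadic descendant of an interval along a binary string. -/
def arc (g : ℝ → ℝ) : ℝ × ℝ → List Bool → ℝ × ℝ
  | p, [] => p
  | p, b :: l => arc g (child g p b) l

/-- The interval associated with a pair. -/
def ioc (p : ℝ × ℝ) : Set ℝ := Ioc p.1 p.2

theorem Setup.child_lt (S : Setup g L C₁ C₂) {p : ℝ × ℝ} (hp : p.1 < p.2) (b : Bool) :
    (child g p b).1 < (child g p b).2 := by
  obtain ⟨h1, h2, _⟩ := S.med_spec (x := p.1) (y := p.2) hp
  cases b <;> simp [child, h1, h2]

theorem Setup.child_subset (S : Setup g L C₁ C₂) {p : ℝ × ℝ} (hp : p.1 < p.2) (b : Bool) :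
    ioc (child g p b) ⊆ ioc p := by
  obtain ⟨h1, h2, _⟩ := S.med_spec (x := p.1) (y := p.2) hp
  cases b <;> simp only [child, ioc, if_true, if_false, Bool.false_eq_true] <;>
    [exact Ioc_subset_Ioc_right h2.le; exact Ioc_subset_Ioc_left h1.le]

theorem Setup.child_union (S : Setup g L C₁ C₂) {p : ℝ × ℝ} (hp : p.1 < p.2) :
    ioc (child g p false) ∪ ioc (child g p true) = ioc p := by
  obtain ⟨h1, h2, _⟩ := S.med_spec (x := p.1) (y := p.2) hp
  simp only [child, ioc, if_true, if_false, Bool.false_eq_true]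
  exact Ioc_union_Ioc_eq_Ioc h1.le h2.le

theorem Setup.child_disjoint (S : Setup g L C₁ C₂) (p : ℝ × ℝ) :
    Disjoint (ioc (child g p false)) (ioc (child g p true)) := by
  simp only [child, ioc, if_true, if_false, Bool.false_eq_true]
  exact Ioc_disjoint_Ioc_of_le le_rfl

theorem Setup.child_nu (S : Setup g L C₁ C₂) {p : ℝ × ℝ} (hp : p.1 < p.2) (b : Bool) :
    2 * nu g (ioc (child g p b)) = nu g (ioc p) := by
  obtain ⟨h1, h2, h3⟩ := S.med_spec (x := p.1) (y := p.2) hp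
  have hiocp : ioc p = Ioc p.1 p.2 := rfl
  have hfin : nu g (Ioc p.1 p.2) ≠ ∞ := (S.nu_lt_top (subset_refl _)).ne
  have hsplit : nu g (Ioc p.1 (med g p.1 p.2)) + nu g (Ioc (med g p.1 p.2) p.2)
      = nu g (Ioc p.1 p.2) := by
    rw [← measure_union (Ioc_disjoint_Ioc_of_le le_rfl) measurableSet_Ioc,
      Ioc_union_Ioc_eq_Ioc h1.le h2.le]
  have h5 : nu g (Ioc p.1 p.2) / 2 ≠ ∞ := (ENNReal.div_lt_top hfin (by norm_num)).ne
  have hright : nu g (Ioc (med g p.1 p.2) p.2) = nu g (Ioc p.1 p.2) / 2 := by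
    have h4 : nu g (Ioc p.1 p.2) / 2 + nu g (Ioc (med g p.1 p.2) p.2) = nu g (Ioc p.1 p.2) := by
      rw [← h3]; exact hsplit
    calc nu g (Ioc (med g p.1 p.2) p.2)
        = nu g (Ioc p.1 p.2) / 2 + nu g (Ioc (med g p.1 p.2) p.2) - nu g (Ioc p.1 p.2) / 2 :=
          (ENNReal.add_sub_cancel_left h5).symm
      _ = nu g (Ioc p.1 p.2) - nu g (Ioc p.1 p.2) / 2 := by rw [h4]
      _ = nu g (Ioc p.1 p.2) / 2 := ENNReal.sub_half hfin
  have key : nu g (ioc (child g p b)) = nu g (Ioc p.1 p.2) / 2 := by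
    cases b <;> simp only [child, ioc, if_true, if_false, Bool.false_eq_true] <;>
      [exact h3; exact hright]
  rw [key, hiocp, ENNReal.mul_div_cancel' (by norm_num) (by norm_num)]

theorem arc_nil (g : ℝ → ℝ) (p : ℝ × ℝ) : arc g p [] = p := rfl

theorem arc_cons (g : ℝ → ℝ) (p : ℝ × ℝ) (b : Bool) (l : List Bool) :
    arc g p (b :: l) = arc g (child g p b) l := rfl

theorem arc_append (g : ℝ → ℝ) (p : ℝ × ℝ) (l₁ l₂ : List Bool) :
    arc g p (l₁ ++ l₂) = arc g (arc g p l₁) l₂ := by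
  induction l₁ generalizing p with
  | nil => rfl
  | cons b l ih => rw [List.cons_append, arc_cons, arc_cons, ih]

theorem Setup.child_within (S : Setup g L C₁ C₂) {p : ℝ × ℝ} (hp : p.1 < p.2) (b : Bool) :
    p.1 ≤ (child g p b).1 ∧ (child g p b).2 ≤ p.2 := by
  obtain ⟨h1, h2, _⟩ := S.med_spec (x := p.1) (y := p.2) hp
  cases b <;> simp [child] <;> linarith

theorem Setup.child_len (S : Setup g L C₁ C₂) {p : ℝ × ℝ} (hp : p.1 < p.2)
    (hpL : p.2 ≤ p.1 + L) (b : Bool) : (child g p b).2 ≤ (child g p b).1 + L := by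
  obtain ⟨hl, hr⟩ := S.child_within hp b
  linarith

theorem Setup.arc_lt (S : Setup g L C₁ C₂) {p : ℝ × ℝ} (hp : p.1 < p.2) (l : List Bool) :
    (arc g p l).1 < (arc g p l).2 := by
  induction l generalizing p with
  | nil => exact hp
  | cons b l ih => rw [arc_cons]; exact ih (S.child_lt hp b)

theorem Setup.arc_subset (S : Setup g L C₁ C₂) {p : ℝ × ℝ} (hp : p.1 < p.2) (l : List Bool) :
    ioc (arc g p l) ⊆ ioc p := by
  induction l generalizing p with
  | nil => exact subset_refl _
  | cons b l ih =>
    rw [arc_cons]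
    exact (ih (S.child_lt hp b)).trans (S.child_subset hp b)

theorem Setup.arc_len (S : Setup g L C₁ C₂) {p : ℝ × ℝ} (hp : p.1 < p.2)
    (hpL : p.2 ≤ p.1 + L) (l : List Bool) : (arc g p l).2 ≤ (arc g p l).1 + L := by
  induction l generalizing p with
  | nil => exact hpL
  | cons b l ih => rw [arc_cons]; exact ih (S.child_lt hp b) (S.child_len hp hpL b)

theorem Setup.arc_vol (S : Setup g L C₁ C₂) {p : ℝ × ℝ} (hp : p.1 < p.2)
    (hpL : p.2 ≤ p.1 + L) (l : List Bool) :
    volume (ioc (arc g p l)) ≤ ENNReal.ofReal (t0 C₁ C₂) ^ l.length * volume (ioc p) := by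
  induction l generalizing p with
  | nil => simp [arc_nil]
  | cons b l ih =>
    rw [arc_cons, List.length_cons, pow_succ']
    calc volume (ioc (arc g (child g p b) l))
        ≤ ENNReal.ofReal (t0 C₁ C₂) ^ l.length * volume (ioc (child g p b)) :=
          ih (S.child_lt hp b) (S.child_len hp hpL b)
      _ ≤ ENNReal.ofReal (t0 C₁ C₂) ^ l.length
            * (ENNReal.ofReal (t0 C₁ C₂) * volume (ioc p)) := by
          apply mul_le_mul_right
          apply S.easy_bound hp hpL measurableSet_Ioc (S.child_subset hp b)
          rw [show (Ioc p.1 p.2 : Set ℝ) = ioc p from rfl, ← S.child_nu hp b]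
          exact le_refl _
      _ = ENNReal.ofReal (t0 C₁ C₂) * ENNReal.ofReal (t0 C₁ C₂) ^ l.length * volume (ioc p) := by
          ring

theorem Setup.arc_disjoint (S : Setup g L C₁ C₂) {p : ℝ × ℝ} (hp : p.1 < p.2)
    {l₁ l₂ : List Bool} (h₁ : ¬ l₁ <+: l₂) (h₂ : ¬ l₂ <+: l₁) :
    Disjoint (ioc (arc g p l₁)) (ioc (arc g p l₂)) := by
  induction l₁ generalizing l₂ p with
  | nil => exact absurd (List.nil_prefix) h₁
  | cons a s ih =>
    cases l₂ with
    | nil => exact absurd (List.nil_prefix) h₂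
    | cons b t =>
      by_cases hab : a = b
      · subst hab
        rw [arc_cons, arc_cons]
        refine ih (S.child_lt hp a) ?_ ?_
        · intro h; exact h₁ (List.cons_prefix_cons.mpr ⟨rfl, h⟩)
        · intro h; exact h₂ (List.cons_prefix_cons.mpr ⟨rfl, h⟩)
      · have hd : Disjoint (ioc (child g p a)) (ioc (child g p b)) := by
          cases a <;> cases b <;> simp_all
          · exact S.child_disjoint p
          · exact (S.child_disjoint p).symm
        rw [arc_cons, arc_cons]
        exact hd.mono (S.arc_subset (S.child_lt hp a) s) (S.arc_subset (S.child_lt hp b) t)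

/-! ### Stopping time construction -/

/-- A node of the dyadic tree is *stopped* if `E` fills more than a quarter of its
weighted mass. -/
def stopped (g : ℝ → ℝ) (R : ℝ × ℝ) (E : Set ℝ) (l : List Bool) : Prop :=
  nu g (ioc (arc g R l)) < 4 * nu g (E ∩ ioc (arc g R l))

/-- Maximal stopped nodes. -/
def maxStopped (g : ℝ → ℝ) (R : ℝ × ℝ) (E : Set ℝ) (l : List Bool) : Prop :=
  stopped g R E l ∧ ∀ t, t <+: l → t ≠ l → ¬ stopped g R E t

/-- The union of the maximal stopped intervals. -/
def stopU (g : ℝ → ℝ) (R : ℝ × ℝ) (E : Set ℝ) : Set ℝ :=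
  ⋃ l ∈ {l | maxStopped g R E l}, ioc (arc g R l)

theorem stopU_measurable (g : ℝ → ℝ) (R : ℝ × ℝ) (E : Set ℝ) :
    MeasurableSet (stopU g R E) :=
  MeasurableSet.biUnion (Set.to_countable _) (fun _ _ => measurableSet_Ioc)

open Classical in
/-- The chain of dyadic nodes containing a given point. -/
def chain (g : ℝ → ℝ) (R : ℝ × ℝ) (x : ℝ) : ℕ → List Bool
  | 0 => []
  | n+1 => chain g R x n ++
      [if x ∈ ioc (child g (arc g R (chain g R x n)) false) then false else true]

open Classical in
theorem chain_succ (g : ℝ → ℝ) (R : ℝ × ℝ) (x : ℝ) (n : ℕ) :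
    chain g R x (n+1) = chain g R x n ++
      [if x ∈ ioc (child g (arc g R (chain g R x n)) false) then false else true] := rfl

theorem chain_length (g : ℝ → ℝ) (R : ℝ × ℝ) (x : ℝ) (n : ℕ) :
    (chain g R x n).length = n := by
  induction n with
  | zero => rfl
  | succ n ih => rw [chain_succ, List.length_append, ih]; simp

theorem chain_prefix (g : ℝ → ℝ) (R : ℝ × ℝ) (x : ℝ) {m n : ℕ} (h : m ≤ n) :
    chain g R x m <+: chain g R x n := by
  induction n with
  | zero => rw [Nat.le_zero.mp h]
  | succ n ih =>
    rcases eq_or_lt_of_le h with h' | h'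
    · rw [h']
    · exact (ih (Nat.lt_succ_iff.mp h')).trans
        (by rw [chain_succ]; exact List.prefix_append _ _)

theorem Setup.chain_mem (S : Setup g L C₁ C₂) {R : ℝ × ℝ} (hR : R.1 < R.2) {x : ℝ}
    (hx : x ∈ ioc R) (n : ℕ) : x ∈ ioc (arc g R (chain g R x n)) := by
  induction n with
  | zero => exact hx
  | succ n ih =>
    rw [chain_succ, arc_append]
    set p := arc g R (chain g R x n)
    have hp : p.1 < p.2 := S.arc_lt hR _
    by_cases hxl : x ∈ ioc (child g p false)
    · rw [if_pos hxl]; exact hxl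
    · rw [if_neg hxl]
      have : x ∈ ioc (child g p false) ∪ ioc (child g p true) := by
        rw [S.child_union hp]; exact ih
      rcases this with h | h
      · exact absurd h hxl
      · exact h

theorem prefix_eq_chain (g : ℝ → ℝ) (R : ℝ × ℝ) (x : ℝ) {t : List Bool} {n : ℕ}
    (h : t <+: chain g R x n) : t = chain g R x t.length := by
  have h1 : t.length ≤ n := by
    have := h.length_le; rwa [chain_length] at this
  have h2 : chain g R x t.length <+: chain g R x n := chain_prefix g R x h1
  have h3 : t <+: chain g R x t.length := by
    apply List.prefix_of_prefix_length_le h h2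
    rw [chain_length]
  exact h3.eq_of_length (by rw [chain_length])

theorem Setup.not_stopped_of_notU (S : Setup g L C₁ C₂) {R : ℝ × ℝ} (hR : R.1 < R.2)
    {E : Set ℝ} {x : ℝ} (hx : x ∈ ioc R) (hxU : x ∉ stopU g R E) (n : ℕ) :
    ¬ stopped g R E (chain g R x n) := by
  intro hn
  classical
  have hex : ∃ m, stopped g R E (chain g R x m) := ⟨n, hn⟩
  have hNs : stopped g R E (chain g R x (Nat.find hex)) := Nat.find_spec hex
  have hmax : maxStopped g R E (chain g R x (Nat.find hex)) := by
    refine ⟨hNs, fun t ht hne => ?_⟩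
    have heq : t = chain g R x t.length := prefix_eq_chain g R x ht
    have hlt : t.length < Nat.find hex := by
      have hle : t.length ≤ Nat.find hex := by
        have := ht.length_le; rwa [chain_length] at this
      rcases lt_or_eq_of_le hle with h' | h'
      · exact h'
      · exact absurd (by rw [heq, h']) hne
    rw [heq]
    exact Nat.find_min hex hlt
  exact hxU (mem_biUnion hmax (S.chain_mem hR hx (Nat.find hex)))

theorem Setup.vol_diff_stopU (S : Setup g L C₁ C₂) {R : ℝ × ℝ} (hR : R.1 < R.2)
    (hRL : R.2 ≤ R.1 + L) {E : Set ℝ} (hE : MeasurableSet E) (hEsub : E ⊆ ioc R) :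
    volume (E \ stopU g R E) = 0 := by
  have hdens := Besicovitch.ae_tendsto_measure_inter_div (volume : Measure ℝ) E
  have hmemE : ∀ᵐ x ∂(volume.restrict E), x ∈ E := ae_restrict_mem hE
  have hae : ∀ᵐ x ∂(volume.restrict E), x ∈ stopU g R E := by
    filter_upwards [hdens, hmemE] with x hx hxE
    by_contra hxU
    have hxR : x ∈ ioc R := hEsub hxE
    have hns := S.not_stopped_of_notU hR hxR hxU
    set c : ℝ≥0∞ := ENNReal.ofReal ((1 + t0 C₁ C₂)/2) with hc
    have hc1 : c < 1 := by
      rw [hc, ENNReal.ofReal_lt_one]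
      nlinarith [t0_lt_one S.hC₁ S.hC₂]
    have ht0p : (0:ℝ) < t0 C₁ C₂ := t0_pos
    set len : ℕ → ℝ := fun n => (arc g R (chain g R x n)).2 - (arc g R (chain g R x n)).1
      with hlen
    have hlenpos : ∀ n, 0 < len n := fun n => sub_pos.mpr (S.arc_lt hR _)
    have hlen_le : ∀ n, len n ≤ (t0 C₁ C₂)^n * (R.2 - R.1) := by
      intro n
      have h1 := S.arc_vol hR hRL (chain g R x n)
      rw [chain_length] at h1
      have h2 : volume (ioc (arc g R (chain g R x n))) = ENNReal.ofReal (len n) :=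
        Real.volume_Ioc
      have h3 : (ENNReal.ofReal (t0 C₁ C₂))^n * volume (ioc R)
          = ENNReal.ofReal ((t0 C₁ C₂)^n * (R.2 - R.1)) := by
        rw [show volume (ioc R) = ENNReal.ofReal (R.2 - R.1) from Real.volume_Ioc,
          ← ENNReal.ofReal_pow (le_of_lt t0_pos),
          ← ENNReal.ofReal_mul (pow_nonneg (le_of_lt t0_pos) n)]
      rw [h2, h3] at h1
      have : (0:ℝ) ≤ (t0 C₁ C₂)^n * (R.2 - R.1) := by
        nlinarith [pow_nonneg (t0_pos (C₁ := C₁) (C₂ := C₂)).le n]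
      exact (ENNReal.ofReal_le_ofReal_iff this).mp h1
    have hlen0 : Filter.Tendsto len Filter.atTop (nhds 0) := by
      apply squeeze_zero (fun n => (hlenpos n).le) hlen_le
      have := (tendsto_pow_atTop_nhds_zero_of_lt_one (le_of_lt t0_pos)
        (t0_lt_one S.hC₁ S.hC₂)).mul_const (R.2 - R.1)
      simpa using this
    have hlenT : Filter.Tendsto len Filter.atTop (nhdsWithin 0 (Ioi 0)) :=
      tendsto_nhdsWithin_iff.mpr ⟨hlen0, Filter.Eventually.of_forall hlenpos⟩
    have hcomp := hx.comp hlenT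
    have hub : ∀ n, volume (E ∩ Metric.closedBall x (len n))
        / volume (Metric.closedBall x (len n)) ≤ c := by
      intro n
      set p := arc g R (chain g R x n) with hp'
      have hp : p.1 < p.2 := S.arc_lt hR _
      have hxp : x ∈ ioc p := S.chain_mem hR hxR n
      have hsubI : ioc p ⊆ Metric.closedBall x (len n) := by
        intro y hy
        rw [Metric.mem_closedBall, Real.dist_eq, abs_le]
        obtain ⟨hy1, hy2⟩ := hy
        obtain ⟨hx1, hx2⟩ := hxp
        have hlv : len n = p.2 - p.1 := rfl
        constructor <;> rw [hlv] <;> linarith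
      -- E ∩ ball is covered by (E ∩ ioc p) and (ball \ ioc p)
      have hsplit : volume (E ∩ Metric.closedBall x (len n))
          ≤ volume (E ∩ ioc p) + volume (Metric.closedBall x (len n) \ ioc p) := by
        refine le_trans (measure_mono ?_) (measure_union_le _ _)
        intro y ⟨hyE, hyB⟩
        by_cases hyp : y ∈ ioc p
        · exact Or.inl ⟨hyE, hyp⟩
        · exact Or.inr ⟨hyB, hyp⟩
      have hEp : volume (E ∩ ioc p) ≤ ENNReal.ofReal (t0 C₁ C₂ * len n) := by
        have hnost := hns n
        rw [stopped, not_lt] at hnost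
        have h2a : 2 * nu g (E ∩ ioc p) ≤ nu g (ioc p) := by
          refine le_trans ?_ hnost
          exact mul_le_mul_left (by norm_num) _
        have := S.easy_bound hp (S.arc_len hR hRL _) (hE.inter measurableSet_Ioc)
          inter_subset_right h2a
        calc volume (E ∩ ioc p) ≤ ENNReal.ofReal (t0 C₁ C₂) * volume (ioc p) := this
          _ = ENNReal.ofReal (t0 C₁ C₂ * len n) := by
              rw [show volume (ioc p) = ENNReal.ofReal (len n) from Real.volume_Ioc,
                ← ENNReal.ofReal_mul (le_of_lt t0_pos)]
      have hball : volume (Metric.closedBall x (len n)) = ENNReal.ofReal (2 * len n) :=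
        Real.volume_closedBall x (len n)
      have hdiffb : volume (Metric.closedBall x (len n) \ ioc p)
          = ENNReal.ofReal (len n) := by
        rw [measure_diff hsubI measurableSet_Ioc.nullMeasurableSet
          (by rw [show volume (ioc p) = ENNReal.ofReal (len n) from Real.volume_Ioc]
              exact ENNReal.ofReal_ne_top),
          hball, show volume (ioc p) = ENNReal.ofReal (len n) from Real.volume_Ioc,
          ← ENNReal.ofReal_sub _ (hlenpos n).le]
        congr 1; ring
      have hnum : volume (E ∩ Metric.closedBall x (len n))
          ≤ ENNReal.ofReal ((1 + t0 C₁ C₂) * len n) := by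
        refine hsplit.trans ?_
        rw [hdiffb]
        calc volume (E ∩ ioc p) + ENNReal.ofReal (len n)
            ≤ ENNReal.ofReal (t0 C₁ C₂ * len n) + ENNReal.ofReal (len n) :=
              add_le_add_left hEp _
          _ = ENNReal.ofReal ((1 + t0 C₁ C₂) * len n) := by
              rw [← ENNReal.ofReal_add (by nlinarith [hlenpos n]) (hlenpos n).le]
              congr 1; ring
      calc volume (E ∩ Metric.closedBall x (len n)) / volume (Metric.closedBall x (len n))
          ≤ ENNReal.ofReal ((1 + t0 C₁ C₂) * len n) / ENNReal.ofReal (2 * len n) := by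
            rw [hball]; exact ENNReal.div_le_div_right hnum _
        _ = c := by
            rw [← ENNReal.ofReal_div_of_pos (by nlinarith [hlenpos n]), hc]
            congr 1
            rw [mul_comm (2:ℝ) (len n), mul_comm (1 + t0 C₁ C₂) (len n)]
            rw [mul_div_mul_left _ _ (hlenpos n).ne']
    have hge : (1:ℝ≥0∞) ≤ c := le_of_tendsto hcomp (Filter.Eventually.of_forall hub)
    exact absurd hge (not_le.mpr hc1)
  rw [ae_iff] at hae
  have hset : {a : ℝ | ¬ a ∈ stopU g R E} = (stopU g R E)ᶜ := rfl
  rw [hset, Measure.restrict_apply (stopU_measurable g R E).compl] at hae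
  rw [show (stopU g R E)ᶜ ∩ E = E \ stopU g R E by rw [diff_eq, inter_comm]] at hae
  exact hae

theorem Setup.stopU_subset (S : Setup g L C₁ C₂) {R : ℝ × ℝ} (hR : R.1 < R.2)
    (E : Set ℝ) : stopU g R E ⊆ ioc R := by
  intro y hy
  obtain ⟨l, _, hl⟩ := mem_iUnion₂.mp hy
  exact S.arc_subset hR l hl

theorem Setup.stopping_step (S : Setup g L C₁ C₂) {R : ℝ × ℝ} (hR : R.1 < R.2)
    (hRL : R.2 ≤ R.1 + L) {E : Set ℝ} (hE : MeasurableSet E) (hEsub : E ⊆ ioc R)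
    (h4 : 4 * nu g E ≤ nu g (ioc R)) :
    nu g (stopU g R E) ≤ 4 * nu g E ∧
      volume E ≤ ENNReal.ofReal (t0 C₁ C₂) * volume (stopU g R E) := by
  classical
  set M := {l : List Bool | maxStopped g R E l} with hM
  have hMc : M.Countable := Set.to_countable M
  have hdisj : M.PairwiseDisjoint (fun l => ioc (arc g R l)) := by
    intro s hs t ht hst
    have h1 : ¬ s <+: t := fun h => (ht.2 s h hst) hs.1
    have h2 : ¬ t <+: s := fun h => (hs.2 t h (Ne.symm hst)) ht.1
    exact S.arc_disjoint hR h1 h2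
  have hdisj2 : M.PairwiseDisjoint (fun l => E ∩ ioc (arc g R l)) := by
    intro s hs t ht hst
    exact (hdisj hs ht hst).mono inter_subset_right inter_subset_right
  have hUeq : stopU g R E = ⋃ l ∈ M, ioc (arc g R l) := rfl
  have hEUeq : E ∩ stopU g R E = ⋃ l ∈ M, (E ∩ ioc (arc g R l)) := by
    rw [hUeq, inter_iUnion₂]
  have hnuU : nu g (stopU g R E) = ∑' l : M, nu g (ioc (arc g R (l : List Bool))) := by
    rw [hUeq]; exact measure_biUnion hMc hdisj (fun _ _ => measurableSet_Ioc)
  have hnuEU : nu g (E ∩ stopU g R E) = ∑' l : M, nu g (E ∩ ioc (arc g R (l : List Bool))) := by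
    rw [hEUeq]
    exact measure_biUnion hMc hdisj2 (fun _ _ => hE.inter measurableSet_Ioc)
  have hvolU : volume (stopU g R E) = ∑' l : M, volume (ioc (arc g R (l : List Bool))) := by
    rw [hUeq]; exact measure_biUnion hMc hdisj (fun _ _ => measurableSet_Ioc)
  have hvolEU : volume (E ∩ stopU g R E)
      = ∑' l : M, volume (E ∩ ioc (arc g R (l : List Bool))) := by
    rw [hEUeq]
    exact measure_biUnion hMc hdisj2 (fun _ _ => hE.inter measurableSet_Ioc)
  constructor
  · rw [hnuU]
    calc ∑' l : M, nu g (ioc (arc g R (l : List Bool)))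
        ≤ ∑' l : M, 4 * nu g (E ∩ ioc (arc g R (l : List Bool))) :=
          ENNReal.tsum_le_tsum (fun l => (l.2.1).le)
      _ = 4 * nu g (E ∩ stopU g R E) := by rw [ENNReal.tsum_mul_left, hnuEU]
      _ ≤ 4 * nu g E := mul_le_mul_right (measure_mono inter_subset_left) _
  · -- per-term estimate on maximal stopped intervals
    have hterm : ∀ l : M, volume (E ∩ ioc (arc g R (l : List Bool)))
        ≤ ENNReal.ofReal (t0 C₁ C₂) * volume (ioc (arc g R (l : List Bool))) := by
      rintro ⟨l, hl⟩
      have hlne : l ≠ [] := by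
        rintro rfl
        have : nu g (ioc R) < 4 * nu g (E ∩ ioc R) := hl.1
        rw [inter_eq_self_of_subset_left hEsub] at this
        exact absurd h4 (not_le.mpr this)
      obtain ⟨q, b, rfl⟩ : ∃ q b, l = q ++ [b] := by
        rcases l.eq_nil_or_concat' with h | h
        · exact absurd h hlne
        · exact h
      have hqpre : q <+: q ++ [b] := List.prefix_append _ _
      have hqne : q ≠ q ++ [b] := by
        intro h; have := congrArg List.length h; simp at this
      have hqns : ¬ stopped g R E q := hl.2 q hqpre hqne
      rw [stopped, not_lt] at hqns
      have harc : arc g R (q ++ [b]) = child g (arc g R q) b := by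
        rw [arc_append]; rfl
      have hqlt : (arc g R q).1 < (arc g R q).2 := S.arc_lt hR q
      have hnu2 : 2 * nu g (ioc (arc g R (q ++ [b]))) = nu g (ioc (arc g R q)) := by
        rw [harc]; exact S.child_nu hqlt b
      have hsub2 : ioc (arc g R (q ++ [b])) ⊆ ioc (arc g R q) := by
        rw [harc]; exact S.child_subset hqlt b
      have h2a : 2 * nu g (E ∩ ioc (arc g R (q ++ [b])))
          ≤ nu g (ioc (arc g R (q ++ [b]))) := by
        have ha : 2 * (2 * nu g (E ∩ ioc (arc g R (q ++ [b]))))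
            ≤ 2 * nu g (ioc (arc g R (q ++ [b]))) := by
          rw [hnu2]
          calc 2 * (2 * nu g (E ∩ ioc (arc g R (q ++ [b]))))
              = 4 * nu g (E ∩ ioc (arc g R (q ++ [b]))) := by ring
            _ ≤ 4 * nu g (E ∩ ioc (arc g R q)) :=
                mul_le_mul_right (measure_mono (inter_subset_inter_right _ hsub2)) _
            _ ≤ nu g (ioc (arc g R q)) := hqns
        exact (ENNReal.mul_le_mul_iff_right (by norm_num) (by norm_num)).mp ha
      exact S.easy_bound (S.arc_lt hR _) (S.arc_len hR hRL _)
        (hE.inter measurableSet_Ioc) inter_subset_right h2a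
    have hvE : volume E ≤ volume (E ∩ stopU g R E) := by
      have hdecomp : volume (E ∩ stopU g R E) + volume (E \ stopU g R E) = volume E :=
        measure_inter_add_diff E (stopU_measurable g R E)
      rw [← hdecomp, S.vol_diff_stopU hR hRL hE hEsub, add_zero]
    calc volume E ≤ volume (E ∩ stopU g R E) := hvE
      _ = ∑' l : M, volume (E ∩ ioc (arc g R (l : List Bool))) := hvolEU
      _ ≤ ∑' l : M, ENNReal.ofReal (t0 C₁ C₂) * volume (ioc (arc g R (l : List Bool))) :=
          ENNReal.tsum_le_tsum hterm
      _ = ENNReal.ofReal (t0 C₁ C₂) * volume (stopU g R E) := by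
          rw [ENNReal.tsum_mul_left, hvolU]

/-- The main induction: sets of very small weighted mass occupy a geometrically
small fraction of the length. -/
theorem Setup.main_induction (S : Setup g L C₁ C₂) (m : ℕ) {R : ℝ × ℝ} (hR : R.1 < R.2)
    (hRL : R.2 ≤ R.1 + L) {E : Set ℝ} (hE : MeasurableSet E) (hEsub : E ⊆ ioc R)
    (hsmall : (2 * 4^m) * nu g E ≤ nu g (ioc R)) :
    volume E ≤ ENNReal.ofReal (t0 C₁ C₂) ^ (m+1) * volume (ioc R) := by
  induction m generalizing E with
  | zero =>
    rw [pow_one]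
    apply S.easy_bound hR hRL hE hEsub
    simpa [ioc] using hsmall
  | succ m ih =>
    have h4 : 4 * nu g E ≤ nu g (ioc R) := by
      refine le_trans ?_ hsmall
      apply mul_le_mul_left
      calc (4:ℝ≥0∞) = 4^1 := (pow_one _).symm
        _ ≤ 4^(m+1) := pow_le_pow_right₀ (by norm_num) (by omega)
        _ ≤ 2 * 4^(m+1) := le_mul_of_one_le_left (zero_le (a := _)) (by norm_num)
    obtain ⟨hU1, hU2⟩ := S.stopping_step hR hRL hE hEsub h4
    have hUsmall : (2 * 4^m) * nu g (stopU g R E) ≤ nu g (ioc R) := by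
      calc (2 * 4^m) * nu g (stopU g R E) ≤ (2 * 4^m) * (4 * nu g E) :=
            mul_le_mul_right hU1 _
        _ = (2 * 4^(m+1)) * nu g E := by rw [pow_succ]; ring
        _ ≤ nu g (ioc R) := hsmall
    have hUvol := ih (stopU_measurable g R E) (S.stopU_subset hR E) hUsmall
    calc volume E ≤ ENNReal.ofReal (t0 C₁ C₂) * volume (stopU g R E) := hU2
      _ ≤ ENNReal.ofReal (t0 C₁ C₂) * (ENNReal.ofReal (t0 C₁ C₂) ^ (m+1) * volume (ioc R)) :=
          mul_le_mul_right hUvol _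
      _ = ENNReal.ofReal (t0 C₁ C₂) ^ (m+2) * volume (ioc R) := by ring

/-- The main real-line theorem. -/
theorem Setup.real_main (S : Setup g L C₁ C₂) :
    ∃ β > (0:ℝ), ∀ u v : ℝ, ∀ E : Set ℝ, u < v → v ≤ u + L → E ⊆ Ioc u v →
      MeasurableSet E →
      (∫ x in E, g x) / (∫ x in Ioc u v, g x) < β →
      (volume E).toReal / (v - u) < 1/2 := by
  obtain ⟨n, hn⟩ := exists_pow_lt_of_lt_one one_half_pos (t0_lt_one S.hC₁ S.hC₂)
  have hpow : (t0 C₁ C₂)^(n+1) < 1/2 := by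
    calc (t0 C₁ C₂)^(n+1) = (t0 C₁ C₂)^n * t0 C₁ C₂ := pow_succ _ _
      _ ≤ (t0 C₁ C₂)^n * 1 := by
          apply mul_le_mul_of_nonneg_left (le_of_lt (t0_lt_one S.hC₁ S.hC₂))
          exact pow_nonneg (le_of_lt t0_pos) n
      _ = (t0 C₁ C₂)^n := mul_one _
      _ < 1/2 := hn
  refine ⟨(2 * 4^n : ℝ)⁻¹, by positivity, ?_⟩
  intro u v E huv hvL hEsub hE hrat
  have hvu : (0:ℝ) < v - u := sub_pos.mpr huv
  set wI : ℝ := ∫ x in Ioc u v, g x with hwI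
  set wE : ℝ := ∫ x in E, g x with hwE
  have hwInn : 0 < wI := by
    have h0 : nu g (Ioc u v) ≠ 0 := (S.nu_Ioc_pos huv).ne'
    rw [S.nu_Ioc_eq u v] at h0
    by_contra hle
    exact h0 (ENNReal.ofReal_eq_zero.mpr (le_of_not_gt hle))
  have hwEnn : 0 ≤ wE :=
    setIntegral_nonneg hE (fun t _ => (S.pos t).le)
  have hsmallR : (2 * 4^n : ℝ) * wE ≤ wI := by
    rw [div_lt_iff₀ hwInn] at hrat
    have h2 : (0:ℝ) < 2 * 4^n := by positivity
    have hlt : (2 * 4^n : ℝ) * wE < (2 * 4^n) * ((2 * 4^n : ℝ)⁻¹ * wI) :=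
      mul_lt_mul_of_pos_left hrat h2
    have heq : (2 * 4^n : ℝ) * ((2 * 4^n : ℝ)⁻¹ * wI) = wI := by field_simp
    rw [heq] at hlt
    exact hlt.le
  have hnuE : nu g E = ENNReal.ofReal wE :=
    S.nu_eq ((S.int u v).mono_set hEsub) hE
  have hsmall : (2 * 4^n : ℝ≥0∞) * nu g E ≤ nu g (Ioc u v) := by
    have hcast : ((2 * 4^n : ℝ≥0∞)) = ENNReal.ofReal ((2 * 4^n : ℝ)) := by
      rw [ENNReal.ofReal_mul (by norm_num), ENNReal.ofReal_pow (by norm_num)]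
      norm_num
    rw [hcast, hnuE, S.nu_Ioc_eq u v, ← ENNReal.ofReal_mul (by positivity)]
    exact ENNReal.ofReal_le_ofReal hsmallR
  have hmain := S.main_induction n (R := (u, v)) huv hvL hE hEsub hsmall
  have hioc : ioc (u, v) = Ioc u v := rfl
  rw [hioc] at hmain
  have hrhs : ENNReal.ofReal (t0 C₁ C₂) ^ (n+1) * volume (Ioc u v)
      = ENNReal.ofReal ((t0 C₁ C₂)^(n+1) * (v - u)) := by
    rw [Real.volume_Ioc, ← ENNReal.ofReal_pow (le_of_lt t0_pos),
      ← ENNReal.ofReal_mul (pow_nonneg (le_of_lt t0_pos) _)]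
  rw [hrhs] at hmain
  have hEfin : volume E ≠ ∞ := by
    refine (lt_of_le_of_lt (measure_mono hEsub) ?_).ne
    rw [Real.volume_Ioc]; exact ENNReal.ofReal_lt_top
  have htr : (volume E).toReal ≤ (t0 C₁ C₂)^(n+1) * (v - u) := by
    have := ENNReal.toReal_mono ENNReal.ofReal_ne_top hmain
    rwa [ENNReal.toReal_ofReal
      (by nlinarith [pow_nonneg (t0_pos (C₁ := C₁) (C₂ := C₂)).le (n+1)])] at this
  rw [div_lt_iff₀ hvu]
  calc (volume E).toReal ≤ (t0 C₁ C₂)^(n+1) * (v - u) := htr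
    _ < 1/2 * (v - u) := by
        apply mul_lt_mul_of_pos_right hpow hvu

end

end CFP

open CFP

namespace CFP

section Transfer

local notation "T" => (2 * Real.pi : ℝ)

theorem equivIoc_coe_of_mem {t x : ℝ} (hx : x ∈ Ioc t (t + T)) :
    (AddCircle.equivIoc T t) ((x : Circle2pi)) = ⟨x, hx⟩ := by
  rw [Equiv.apply_eq_iff_eq_symm_apply]; rfl

theorem coe_inj_on_Ioc {t x y : ℝ} (hx : x ∈ Ioc t (t + T)) (hy : y ∈ Ioc t (t + T))
    (h : (x : Circle2pi) = (y : Circle2pi)) : x = y := by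
  have h1 := equivIoc_coe_of_mem hx
  have h2 := equivIoc_coe_of_mem hy
  rw [h, h2] at h1
  exact (congrArg Subtype.val h1).symm

variable {G : Circle2pi → ℝ}

/-- Transfer of set integrals from the circle to the line. -/
theorem setIntegral_transfer (hGm : Measurable G) (t : ℝ) {A : Set Circle2pi}
    (hA : MeasurableSet A) :
    ∫ x in A, G x = ∫ y in ((fun x : ℝ => (x : Circle2pi)) ⁻¹' A ∩ Ioc t (t + T)),
      G ((y : ℝ) : Circle2pi) := by
  have h1 : ∫ x in A, G x = ∫ x, A.indicator G x := (integral_indicator hA).symm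
  have h2 : ∫ x, A.indicator G x
      = ∫ y in Ioc t (t + T), A.indicator G ((y : ℝ) : Circle2pi) :=
    (AddCircle.integral_preimage T t _).symm
  have hpre : MeasurableSet ((fun x : ℝ => (x : Circle2pi)) ⁻¹' A) :=
    AddCircle.measurable_mk' hA
  have h3 : ∀ y : ℝ, A.indicator G ((y : ℝ) : Circle2pi)
      = ((fun x : ℝ => (x : Circle2pi)) ⁻¹' A).indicator
          (fun z : ℝ => G ((z : ℝ) : Circle2pi)) y := by
    intro y
    by_cases h : ((y : ℝ) : Circle2pi) ∈ A
    · rw [indicator_of_mem h, indicator_of_mem (by exact h)]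
    · rw [indicator_of_notMem h, indicator_of_notMem (by exact h)]
  rw [h1, h2]
  simp_rw [h3]
  rw [integral_indicator hpre, Measure.restrict_restrict hpre]

/-- Transfer of volumes from the circle to the line. -/
theorem volume_transfer (t : ℝ) {A : Set Circle2pi} (hA : MeasurableSet A) :
    volume A = volume ((fun x : ℝ => (x : Circle2pi)) ⁻¹' A ∩ Ioc t (t + T)) :=
  AddCircle.add_projection_respects_measure T t hA

/-- Integrability of the lift on period intervals. -/
theorem integrableOn_lift (hGm : Measurable G) (hGint : Integrable G volume) (t : ℝ) :
    IntegrableOn (fun y : ℝ => G ((y : ℝ) : Circle2pi)) (Ioc t (t + T)) := by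
  constructor
  · exact ((hGm.comp AddCircle.measurable_mk').stronglyMeasurable).aestronglyMeasurable
  · have key := AddCircle.lintegral_preimage T t (fun b : Circle2pi => (‖G b‖₊ : ℝ≥0∞))
    rw [HasFiniteIntegral]
    calc ∫⁻ y in Ioc t (t + T), (‖G ((y : ℝ) : Circle2pi)‖₊ : ℝ≥0∞)
        = ∫⁻ b : Circle2pi, (‖G b‖₊ : ℝ≥0∞) := key
      _ < ∞ := hGint.2

/-- An arc is a measurable subset of the circle. -/
theorem isArc_measurable {u v : ℝ} (hvL : v ≤ u + T) :
    MeasurableSet ((fun x : ℝ => (x : Circle2pi)) '' Ioc u v) := by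
  have hkey : ((fun x : ℝ => (x : Circle2pi)) '' Ioc u v)
      = (fun z : Circle2pi => ((AddCircle.measurableEquivIoc T u) z : ℝ)) ⁻¹' (Ioc u v) := by
    ext z
    constructor
    · rintro ⟨y, hy, rfl⟩
      show ((AddCircle.measurableEquivIoc T u) ((y : ℝ) : Circle2pi) : ℝ) ∈ Ioc u v
      have heq : ((AddCircle.measurableEquivIoc T u) ((y : ℝ) : Circle2pi) : ℝ) = y := by
        show ((AddCircle.equivIoc T u) ((y : ℝ) : Circle2pi) : ℝ) = y
        rw [equivIoc_coe_of_mem (Ioc_subset_Ioc_right hvL hy)]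
      rw [heq]; exact hy
    · intro hz
      refine ⟨((AddCircle.measurableEquivIoc T u) z : ℝ), hz, ?_⟩
      exact (AddCircle.equivIoc T u).symm_apply_apply z
  rw [hkey]
  exact (measurable_subtype_coe.comp
    (AddCircle.measurableEquivIoc T u).measurable) measurableSet_Ioc

end Transfer

end CFP

/-- Coifman–Fefferman: condition (1a) implies condition (2a) for a positive
locally integrable weight `ω` on the unit circle. -/
theorem Ainfty_one_a_implies_two_a
    (ω : Circle2pi → ℝ) (hpos : ∀ x, 0 < ω x)
    (hint : Integrable ω volume)
    (C₁ C₂ : ℝ) (hC₁ : 0 < C₁) (hC₂ : 0 < C₂)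
    (h1a : ∀ I E : Set Circle2pi, IsArc I → E ⊆ I → MeasurableSet E →
      (∫ x in E, ω x) / (∫ x in I, ω x)
        ≤ C₂ * ((volume E).toReal / (volume I).toReal) ^ C₁) :
    ∃ β > (0:ℝ), ∀ I E : Set Circle2pi, IsArc I → E ⊆ I → MeasurableSet E →
      (∫ x in E, ω x) / (∫ x in I, ω x) < β →
      (volume E).toReal / (volume I).toReal < 1 / 2 := by
  classical
  have hsm := hint.aestronglyMeasurable
  set g₀ : Circle2pi → ℝ := hsm.mk ω with hg₀
  have hωg₀ : ω =ᵐ[volume] g₀ := hsm.ae_eq_mk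
  set G : Circle2pi → ℝ := fun x => if 0 < g₀ x then g₀ x else 1 with hG
  have hg₀m : Measurable g₀ := hsm.stronglyMeasurable_mk.measurable
  have hGm : Measurable G :=
    Measurable.ite (measurableSet_lt measurable_const hg₀m) hg₀m measurable_const
  have hGpos : ∀ x, 0 < G x := by
    intro x
    rw [hG]; dsimp only
    split_ifs with h
    · exact h
    · exact one_pos
  have hωG : ω =ᵐ[volume] G := by
    filter_upwards [hωg₀] with x hx
    rw [hG]; dsimp only
    rw [← hx, if_pos (hpos x)]
  have hGint : Integrable G volume := hint.congr hωG
  have hsetint : ∀ A : Set Circle2pi, ∫ x in A, ω x = ∫ x in A, G x := fun A =>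
    integral_congr_ae (ae_restrict_of_ae hωG)
  set gr : ℝ → ℝ := fun y => G ((y : ℝ) : Circle2pi) with hgr
  have hgrm : Measurable gr := hGm.comp AddCircle.measurable_mk'
  have hgrpos : ∀ y, 0 < gr y := fun y => hGpos _
  have hper : ∀ t : ℝ, IntegrableOn gr (Ioc t (t + 2 * Real.pi)) :=
    CFP.integrableOn_lift hGm hGint
  have hT : (0:ℝ) < 2 * Real.pi := by positivity
  have hint' : ∀ a b : ℝ, IntegrableOn gr (Ioc a b) := by
    intro a b
    have hcover : ∀ k : ℕ, IntegrableOn gr (Ioc a (a + k * (2 * Real.pi))) := by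
      intro k
      induction k with
      | zero => simp
      | succ k ih =>
        have hsplit : Ioc a (a + (k+1 : ℕ) * (2 * Real.pi))
            = Ioc a (a + k * (2 * Real.pi))
              ∪ Ioc (a + k * (2 * Real.pi)) (a + k * (2 * Real.pi) + 2 * Real.pi) := by
          rw [Ioc_union_Ioc_eq_Ioc (by nlinarith [Nat.cast_nonneg (α := ℝ) k])
            (by nlinarith)]
          congr 1
          push_cast; ring
        rw [hsplit]
        exact ih.union (hper _)
    obtain ⟨k, hk⟩ := exists_nat_ge ((b - a) / (2 * Real.pi))
    have hb : b ≤ a + k * (2 * Real.pi) := by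
      rw [div_le_iff₀ hT] at hk
      linarith
    exact (hcover k).mono_set (Ioc_subset_Ioc_right hb)
  have hnu : ∀ (A : Set ℝ), MeasurableSet A → IntegrableOn gr A →
      CFP.nu gr A = ENNReal.ofReal (∫ y in A, gr y) := by
    intro A hA hi
    rw [CFP.nu, withDensity_apply _ hA,
      ← ofReal_integral_eq_lintegral_ofReal hi
        (Filter.Eventually.of_forall fun y => (hgrpos y).le)]
  -- positivity of interval integrals
  have hIocpos : ∀ u v : ℝ, u < v → 0 < ∫ y in Ioc u v, gr y := by
    intro u v huv
    rw [setIntegral_pos_iff_support_of_nonneg_ae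
      (Filter.Eventually.of_forall fun y => (hgrpos y).le) (hint' u v)]
    have hsupp : Function.support gr ∩ Ioc u v = Ioc u v := by
      rw [inter_eq_right]
      intro y _
      exact (hgrpos y).ne'
    rw [hsupp, Real.volume_Ioc]
    rw [ENNReal.ofReal_pos]
    linarith
  -- derive the real-line (1a)
  have h1a' : ∀ u v : ℝ, ∀ E : Set ℝ, u < v → v ≤ u + 2 * Real.pi → E ⊆ Ioc u v →
      MeasurableSet E →
      CFP.nu gr E ≤ ENNReal.ofReal (C₂ * ((volume E).toReal / (v - u)) ^ C₁)
        * CFP.nu gr (Ioc u v) := by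
    intro u v E huv hvL hEsub hE
    set Ic : Set Circle2pi := (fun x : ℝ => (x : Circle2pi)) '' Ioc u v with hIcdef
    set q : Circle2pi → ℝ :=
      fun z => ((AddCircle.measurableEquivIoc (2 * Real.pi) u) z : ℝ) with hq
    have hqm : Measurable q :=
      measurable_subtype_coe.comp (AddCircle.measurableEquivIoc (2 * Real.pi) u).measurable
    have hqeq : ∀ z : Circle2pi,
        q z = ((AddCircle.equivIoc (2 * Real.pi) u) z : ℝ) := fun _ => rfl
    have hqcoe : ∀ {x : ℝ}, x ∈ Ioc u (u + 2 * Real.pi) → q ((x : ℝ) : Circle2pi) = x := by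
      intro x hx
      rw [hqeq, CFP.equivIoc_coe_of_mem hx]
    have hcoeq : ∀ z : Circle2pi, ((q z : ℝ) : Circle2pi) = z := by
      intro z
      rw [hqeq]
      exact (AddCircle.equivIoc (2 * Real.pi) u).symm_apply_apply z
    set Ec : Set Circle2pi := q ⁻¹' E with hEcdef
    have hEwin : E ⊆ Ioc u (u + 2 * Real.pi) := hEsub.trans (Ioc_subset_Ioc_right hvL)
    have hEcmeas : MeasurableSet Ec := hqm hE
    have hEpre : (fun x : ℝ => (x : Circle2pi)) ⁻¹' Ec ∩ Ioc u (u + 2 * Real.pi) = E := by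
      ext x
      constructor
      · rintro ⟨hx1, hx2⟩
        have : q ((x : ℝ) : Circle2pi) ∈ E := hx1
        rwa [hqcoe hx2] at this
      · intro hx
        have hxw := hEwin hx
        refine ⟨?_, hxw⟩
        show q ((x : ℝ) : Circle2pi) ∈ E
        rw [hqcoe hxw]; exact hx
    have hEcsub : Ec ⊆ Ic := by
      intro z hz
      exact ⟨q z, hEsub hz, hcoeq z⟩
    have hIceq : Ic = q ⁻¹' (Ioc u v) := by
      ext z
      constructor
      · rintro ⟨y, hy, rfl⟩
        show q ((y : ℝ) : Circle2pi) ∈ Ioc u v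
        rw [hqcoe (Ioc_subset_Ioc_right hvL hy)]; exact hy
      · intro hz
        exact ⟨q z, hz, hcoeq z⟩
    have hIcmeas : MeasurableSet Ic := by rw [hIceq]; exact hqm measurableSet_Ioc
    have hIpre : (fun x : ℝ => (x : Circle2pi)) ⁻¹' Ic ∩ Ioc u (u + 2 * Real.pi)
        = Ioc u v := by
      ext x
      constructor
      · rintro ⟨hx1, hx2⟩
        rw [hIceq] at hx1
        have : q ((x : ℝ) : Circle2pi) ∈ Ioc u v := hx1
        rwa [hqcoe hx2] at this
      · intro hx
        exact ⟨⟨x, hx, rfl⟩, Ioc_subset_Ioc_right hvL hx⟩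
    have hvolE : volume Ec = volume E := by
      rw [CFP.volume_transfer u hEcmeas, hEpre]
    have hvolI : volume Ic = ENNReal.ofReal (v - u) := by
      rw [CFP.volume_transfer u hIcmeas, hIpre, Real.volume_Ioc]
    have hintE : ∫ x in Ec, ω x = ∫ y in E, gr y := by
      rw [hsetint, CFP.setIntegral_transfer hGm u hEcmeas, hEpre]
    have hintI : ∫ x in Ic, ω x = ∫ y in Ioc u v, gr y := by
      rw [hsetint, CFP.setIntegral_transfer hGm u hIcmeas, hIpre]
    have harc : IsArc Ic := ⟨u, v, huv, hvL, rfl⟩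
    have h := h1a Ic Ec harc hEcsub hEcmeas
    rw [hintE, hintI, hvolE, hvolI, ENNReal.toReal_ofReal (by linarith)] at h
    have hIpos := hIocpos u v huv
    rw [div_le_iff₀ hIpos] at h
    have hCnn : (0:ℝ) ≤ C₂ * ((volume E).toReal / (v - u)) ^ C₁ := by
      apply mul_nonneg hC₂.le
      exact Real.rpow_nonneg (div_nonneg ENNReal.toReal_nonneg (by linarith)) _
    rw [hnu E hE ((hint' u v).mono_set hEsub), hnu (Ioc u v) measurableSet_Ioc (hint' u v)]
    calc ENNReal.ofReal (∫ y in E, gr y)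
        ≤ ENNReal.ofReal ((C₂ * ((volume E).toReal / (v - u)) ^ C₁)
            * ∫ y in Ioc u v, gr y) := ENNReal.ofReal_le_ofReal h
      _ = ENNReal.ofReal (C₂ * ((volume E).toReal / (v - u)) ^ C₁)
            * ENNReal.ofReal (∫ y in Ioc u v, gr y) := ENNReal.ofReal_mul hCnn
  have S : CFP.Setup gr (2 * Real.pi) C₁ C₂ :=
    ⟨hgrm, hgrpos, hint', hT, hC₁, hC₂, h1a'⟩
  obtain ⟨β, hβ, hmain⟩ := S.real_main
  refine ⟨β, hβ, ?_⟩
  rintro I E ⟨a, b, hab, hbL, rfl⟩ hEsub hE hlt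
  set Er : Set ℝ := (fun x : ℝ => (x : Circle2pi)) ⁻¹' E ∩ Ioc a (a + 2 * Real.pi)
    with hEr
  have hErmeas : MeasurableSet Er :=
    (AddCircle.measurable_mk' hE).inter measurableSet_Ioc
  have hErsub : Er ⊆ Ioc a b := by
    rintro x ⟨hx1, hx2⟩
    obtain ⟨y, hy, hxy⟩ := hEsub hx1
    have : y = x := CFP.coe_inj_on_Ioc (Ioc_subset_Ioc_right hbL hy) hx2 hxy
    rwa [← this]
  have hIpre : (fun x : ℝ => (x : Circle2pi)) ⁻¹' ((fun x : ℝ => (x : Circle2pi)) '' Ioc a b)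
      ∩ Ioc a (a + 2 * Real.pi) = Ioc a b := by
    ext x
    constructor
    · rintro ⟨⟨y, hy, hxy⟩, hx2⟩
      have : y = x := CFP.coe_inj_on_Ioc (Ioc_subset_Ioc_right hbL hy) hx2 hxy
      rwa [← this]
    · intro hx
      exact ⟨⟨x, hx, rfl⟩, Ioc_subset_Ioc_right hbL hx⟩
  have hImeas : MeasurableSet ((fun x : ℝ => (x : Circle2pi)) '' Ioc a b) :=
    CFP.isArc_measurable hbL
  have hvolE : volume E = volume Er := CFP.volume_transfer a hE
  have hvolI : volume ((fun x : ℝ => (x : Circle2pi)) '' Ioc a b)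
      = ENNReal.ofReal (b - a) := by
    rw [CFP.volume_transfer a hImeas, hIpre, Real.volume_Ioc]
  have hintE : ∫ x in E, ω x = ∫ y in Er, gr y := by
    rw [hsetint, CFP.setIntegral_transfer hGm a hE]
  have hintI : ∫ x in (fun x : ℝ => (x : Circle2pi)) '' Ioc a b, ω x
      = ∫ y in Ioc a b, gr y := by
    rw [hsetint, CFP.setIntegral_transfer hGm a hImeas, hIpre]
  rw [hintE, hintI] at hlt
  have hconc := hmain a b Er hab hbL hErsub hErmeas hlt
  rw [hvolE, hvolI, ENNReal.toReal_ofReal (by linarith)]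
  exact hconc
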